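/- Let σ : ℝ^n → ℝ^m be twice continuously differentiable with ‖Dσ(x)‖ ≤ K and ‖D²σ(x)‖ ≤ K for all x ∈ ℝ^n. Then for all u_1, v_1, u_2, v_2 ∈ ℝ^n: ‖σ(u_1) − σ(v_1) − σ(u_2) + σ(v_2)‖ ≤ K ‖u_1 − v_1 − u_2 + v_2‖ + K ‖u_1 − u_2‖ (‖u_1 − v_1‖ + ‖u_2 − v_2‖). -/

import Mathlib

theorem second_order_increment_bound {n m : ℕ}
    (σ : EuclideanSpace ℝ (Fin n) → EuclideanSpace ℝ (Fin m)) (K : ℝ)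
    (hσ : ContDiff ℝ 2 σ)
    (hD1 : ∀ x, ‖fderiv ℝ σ x‖ ≤ K)
    (hD2 : ∀ x, ‖fderiv ℝ (fderiv ℝ σ) x‖ ≤ K) :
    ∀ u₁ v₁ u₂ v₂ : EuclideanSpace ℝ (Fin n),
      ‖σ u₁ - σ v₁ - σ u₂ + σ v₂‖ ≤
        K * ‖u₁ - v₁ - u₂ + v₂‖ + K * ‖u₁ - u₂‖ * (‖u₁ - v₁‖ + ‖u₂ - v₂‖) := by
  intro u₁ v₁ u₂ v₂
  have hK0 : (0 : ℝ) ≤ K := le_trans (norm_nonneg _) (hD1 0)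
  have hdiff : Differentiable ℝ σ := hσ.differentiable two_ne_zero
  have hd2 : Differentiable ℝ (fderiv ℝ σ) :=
    (hσ.fderiv_right (m := 1) (le_refl _)).differentiable one_ne_zero
  -- Lipschitz of fderiv σ
  have hlip : ∀ a b : EuclideanSpace ℝ (Fin n),
      ‖fderiv ℝ σ a - fderiv ℝ σ b‖ ≤ K * ‖a - b‖ := by
    intro a b
    exact Convex.norm_image_sub_le_of_norm_fderiv_le
      (fun x _ => hd2 x) (fun x _ => hD2 x)
      convex_univ (Set.mem_univ b) (Set.mem_univ a)
  set d₁ := u₁ - u₂ with hd₁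
  set d₂ := v₁ - v₂ with hd₂def
  set g : ℝ → EuclideanSpace ℝ (Fin m) :=
    fun t => σ (u₂ + t • d₁) - σ (v₂ + t • d₂) with hg
  have hline : ∀ (c d : EuclideanSpace ℝ (Fin n)) (s : ℝ),
      HasDerivAt (fun t : ℝ => c + t • d) d s := by
    intro c d s
    simpa using ((hasDerivAt_id s).smul_const d).const_add c
  have hgderiv : ∀ s : ℝ, HasDerivAt g
      (fderiv ℝ σ (u₂ + s • d₁) d₁ - fderiv ℝ σ (v₂ + s • d₂) d₂) s := by
    intro s
    exact (((hdiff _).hasFDerivAt.comp_hasDerivAt s (hline u₂ d₁ s)).sub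
      ((hdiff _).hasFDerivAt.comp_hasDerivAt s (hline v₂ d₂ s)))
  set C : ℝ := K * ‖u₁ - v₁ - u₂ + v₂‖ + K * ‖u₁ - u₂‖ * (‖u₁ - v₁‖ + ‖u₂ - v₂‖) with hC
  have hbound : ∀ s ∈ Set.Ico (0 : ℝ) 1,
      ‖fderiv ℝ σ (u₂ + s • d₁) d₁ - fderiv ℝ σ (v₂ + s • d₂) d₂‖ ≤ C := by
    intro s hs
    set p := u₂ + s • d₁
    set q := v₂ + s • d₂
    have key : fderiv ℝ σ p d₁ - fderiv ℝ σ q d₂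
        = (fderiv ℝ σ p - fderiv ℝ σ q) d₁ + fderiv ℝ σ q (u₁ - v₁ - u₂ + v₂) := by
      simp only [ContinuousLinearMap.sub_apply, hd₁, hd₂def, map_sub, map_add]
      abel
    rw [key]
    have hpq : ‖p - q‖ ≤ ‖u₁ - v₁‖ + ‖u₂ - v₂‖ := by
      have : p - q = (1 - s) • (u₂ - v₂) + s • (u₁ - v₁) := by
        simp only [p, q, hd₁, hd₂def, sub_smul, smul_sub, one_smul]
        abel
      rw [this]
      calc ‖(1 - s) • (u₂ - v₂) + s • (u₁ - v₁)‖
          ≤ ‖(1 - s) • (u₂ - v₂)‖ + ‖s • (u₁ - v₁)‖ := norm_add_le _ _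
        _ = |1 - s| * ‖u₂ - v₂‖ + |s| * ‖u₁ - v₁‖ := by
            rw [norm_smul, norm_smul, Real.norm_eq_abs, Real.norm_eq_abs]
        _ ≤ 1 * ‖u₂ - v₂‖ + 1 * ‖u₁ - v₁‖ := by
            gcongr
            · rw [abs_le]; constructor <;> [linarith [hs.2]; linarith [hs.1]]
            · rw [abs_le]; constructor <;> [linarith [hs.1]; linarith [hs.2]]
        _ = ‖u₁ - v₁‖ + ‖u₂ - v₂‖ := by ring
    calc ‖(fderiv ℝ σ p - fderiv ℝ σ q) d₁ + fderiv ℝ σ q (u₁ - v₁ - u₂ + v₂)‖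
        ≤ ‖(fderiv ℝ σ p - fderiv ℝ σ q) d₁‖ + ‖fderiv ℝ σ q (u₁ - v₁ - u₂ + v₂)‖ :=
          norm_add_le _ _
      _ ≤ ‖fderiv ℝ σ p - fderiv ℝ σ q‖ * ‖d₁‖
          + ‖fderiv ℝ σ q‖ * ‖u₁ - v₁ - u₂ + v₂‖ := by
          gcongr <;> exact ContinuousLinearMap.le_opNorm _ _
      _ ≤ (K * ‖p - q‖) * ‖d₁‖ + K * ‖u₁ - v₁ - u₂ + v₂‖ := by
          gcongr
          · exact hlip p q
          · exact hD1 q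
      _ ≤ (K * (‖u₁ - v₁‖ + ‖u₂ - v₂‖)) * ‖d₁‖ + K * ‖u₁ - v₁ - u₂ + v₂‖ := by
          gcongr
      _ = C := by rw [hC, hd₁]; ring
  have hmvt : ‖g 1 - g 0‖ ≤ C :=
    norm_image_sub_le_of_norm_deriv_le_segment_01'
      (fun s _ => (hgderiv s).hasDerivWithinAt) hbound
  have e1 : u₂ + (1 : ℝ) • d₁ = u₁ := by rw [one_smul, hd₁]; abel
  have e2 : v₂ + (1 : ℝ) • d₂ = v₁ := by rw [one_smul, hd₂def]; abel
  have hg1 : g 1 = σ u₁ - σ v₁ := by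
    show σ (u₂ + (1 : ℝ) • d₁) - σ (v₂ + (1 : ℝ) • d₂) = _
    rw [e1, e2]
  have hg0 : g 0 = σ u₂ - σ v₂ := by
    show σ (u₂ + (0 : ℝ) • d₁) - σ (v₂ + (0 : ℝ) • d₂) = _
    rw [zero_smul, zero_smul, add_zero, add_zero]
  have : σ u₁ - σ v₁ - σ u₂ + σ v₂ = g 1 - g 0 := by rw [hg1, hg0]; abel
  rw [this]
  exact hmvt
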